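/- Let p be a prime number. The polynomial f(X) = X^{p−1} + X^{p−2} + ⋯ + X + 1 is irreducible as an element of ℤ[i][X], the ring of polynomials over the Gaussian integers. -/

import Mathlib

open Polynomial

lemma gauss_prime_of_norm_eq {π : GaussianInt} {p : ℕ} (hp : p.Prime)
    (hnormabs : π.norm.natAbs = p) : Prime π := by
  rw [← UniqueFactorizationMonoid.irreducible_iff_prime]
  constructor
  · rw [← Zsqrtd.norm_eq_one_iff, hnormabs]
    exact hp.ne_one
  · intro x y hxy
    have hmn : x.norm.natAbs * y.norm.natAbs = p := by
      rw [← Int.natAbs_mul, ← Zsqrtd.norm_mul, ← hxy, hnormabs]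
    rcases hp.eq_one_or_self_of_dvd x.norm.natAbs ⟨_, hmn.symm⟩ with h1 | h1
    · exact Or.inl (Zsqrtd.norm_eq_one_iff.1 h1)
    · right
      rw [h1] at hmn
      have : y.norm.natAbs = 1 := by
        have := hmn
        nth_rewrite 2 [← mul_one p] at this
        exact mul_left_cancel₀ hp.pos.ne' this
      exact Zsqrtd.norm_eq_one_iff.1 this

lemma exists_gauss_prime (p : ℕ) (hp : p.Prime) (hodd : p ≠ 2) :
    ∃ π : GaussianInt, Prime π ∧ π ∣ (p : GaussianInt) ∧
      (p : GaussianInt) ∉ Ideal.span {π} ^ 2 := by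
  haveI : Fact p.Prime := ⟨hp⟩
  rcases eq_or_ne (p % 4) 3 with h3 | h3
  · refine ⟨(p : GaussianInt), (GaussianInt.prime_iff_mod_four_eq_three_of_nat_prime p).2 h3,
      dvd_refl _, ?_⟩
    rw [Ideal.span_singleton_pow, Ideal.mem_span_singleton]
    rintro ⟨c, hc⟩
    have hp0 : (p : GaussianInt) ≠ 0 := Nat.cast_ne_zero.2 hp.ne_zero
    have h1 : (1 : GaussianInt) = (p : GaussianInt) * c := by
      rw [pow_two, mul_assoc] at hc
      exact mul_left_cancel₀ hp0 (by rw [mul_one]; exact hc)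
    exact ((GaussianInt.prime_iff_mod_four_eq_three_of_nat_prime p).2 h3).not_unit
      (IsUnit.of_mul_eq_one c h1.symm)
  · obtain ⟨a, b, hab⟩ := Nat.Prime.sq_add_sq h3
    set π : GaussianInt := ⟨(a : ℤ), (b : ℤ)⟩ with hπdef
    have hnorm : π.norm = (p : ℤ) := by
      rw [Zsqrtd.norm_def]
      push_cast [← hab]
      ring
    have hnormabs : π.norm.natAbs = p := by rw [hnorm]; exact Int.natAbs_natCast p
    have hπ0 : π ≠ 0 := by
      intro h
      rw [h, Zsqrtd.norm_zero] at hnorm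
      exact hp.ne_zero (by exact_mod_cast hnorm.symm)
    have hprime : Prime π := gauss_prime_of_norm_eq hp hnormabs
    have hpdecomp : (p : GaussianInt) = π * star π := by
      rw [← Zsqrtd.norm_eq_mul_conj, hnorm]
      push_cast
      ring
    refine ⟨π, hprime, ⟨star π, hpdecomp⟩, ?_⟩
    rw [Ideal.span_singleton_pow, Ideal.mem_span_singleton]
    rintro ⟨c, hc⟩
    -- π ∣ star π
    have hdvdstar : π ∣ star π := by
      have : π * star π = π * (π * c) := by rw [← hpdecomp, hc]; ring
      exact ⟨c, mul_left_cancel₀ hπ0 this⟩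
    -- π ∣ 2a and π ∣ 2b
    have hd2a : π ∣ ((2 * a : ℤ) : GaussianInt) := by
      have h1 : star π + π = ((2 * a : ℤ) : GaussianInt) := by
        rw [hπdef, Zsqrtd.star_mk]
        ext <;> simp <;> ring
      exact h1 ▸ dvd_add hdvdstar dvd_rfl
    have hd2b : π ∣ ((2 * b : ℤ) : GaussianInt) := by
      have h1 : (⟨0, -1⟩ : GaussianInt) * (π - star π) = ((2 * b : ℤ) : GaussianInt) := by
        rw [hπdef, Zsqrtd.star_mk]
        ext <;> simp [Zsqrtd.re_mul, Zsqrtd.im_mul] <;> ring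
      exact h1 ▸ Dvd.dvd.mul_left (dvd_sub dvd_rfl hdvdstar) _
    -- coprimality of a and b
    have hcop : IsCoprime (a : ℤ) (b : ℤ) := by
      rw [Int.isCoprime_iff_gcd_eq_one, Int.gcd_natCast_natCast]
      by_contra hg
      have hgdvd : (Nat.gcd a b) ^ 2 ∣ p := by
        rw [← hab]
        exact dvd_add (pow_dvd_pow_of_dvd (Nat.gcd_dvd_left a b) 2)
          (pow_dvd_pow_of_dvd (Nat.gcd_dvd_right a b) 2)
      have hgp : Nat.gcd a b ∣ p := dvd_trans (dvd_pow_self _ two_ne_zero) hgdvd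
      rcases hp.eq_one_or_self_of_dvd _ hgp with h | h
      · exact hg h
      · rw [h] at hgdvd
        have : p ^ 2 ≤ p := Nat.le_of_dvd hp.pos hgdvd
        nlinarith [hp.two_le]
    obtain ⟨u, v, huv⟩ := hcop
    -- π ∣ 2
    have hd2 : π ∣ (2 : GaussianInt) := by
      have hz : (2 : ℤ) = u * (2 * a) + v * (2 * b) := by linear_combination (-2 : ℤ) * huv
      have hzc : ((2 : ℤ) : GaussianInt) = ((u : ℤ) : GaussianInt) * ((2 * a : ℤ) : GaussianInt)
          + ((v : ℤ) : GaussianInt) * ((2 * b : ℤ) : GaussianInt) := by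
        rw [← Int.cast_mul, ← Int.cast_mul, ← Int.cast_add, ← hz]
      have h2 : π ∣ ((2 : ℤ) : GaussianInt) := by
        rw [hzc]
        exact dvd_add (Dvd.dvd.mul_left hd2a _) (Dvd.dvd.mul_left hd2b _)
      exact_mod_cast h2
    obtain ⟨w, hw⟩ := hd2
    have hnormdvd : (p : ℤ) ∣ 4 := by
      have := congrArg Zsqrtd.norm hw
      rw [Zsqrtd.norm_mul, hnorm] at this
      have h4 : Zsqrtd.norm (2 : GaussianInt) = 4 := by decide
      exact ⟨_, by rw [← this, h4]⟩
    have h4 : p ∣ 4 := by exact_mod_cast hnormdvd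
    have hsq : p ∣ 2 ^ 2 := by norm_num; exact h4
    exact hodd ((Nat.prime_dvd_prime_iff_eq hp Nat.prime_two).1 (hp.dvd_of_dvd_pow hsq))

theorem stmt10 (p : ℕ) (hp : p.Prime) :
    Irreducible (∑ i ∈ Finset.range p, (X : Polynomial GaussianInt) ^ i) := by
  rcases eq_or_ne p 2 with rfl | hp2
  · have h2 : (∑ i ∈ Finset.range 2, (X : Polynomial GaussianInt) ^ i) = X + C 1 := by
      simp [Finset.sum_range_succ]
      ring
    rw [h2]
    exact (monic_X_add_C 1).irreducible_of_degree_eq_one (degree_X_add_C 1)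
  · haveI : Fact p.Prime := ⟨hp⟩
    obtain ⟨π, hπ, hdvd, hmem⟩ := exists_gauss_prime p hp hp2
    have hcyc : (∑ i ∈ Finset.range p, (X : Polynomial GaussianInt) ^ i)
        = cyclotomic p GaussianInt := (cyclotomic_prime _ p).symm
    rw [hcyc]
    set e := algEquivAevalXAddC (1 : GaussianInt) with he
    rw [← MulEquiv.irreducible_iff e]
    have hIntMonic : ((cyclotomic p ℤ).comp (X + 1)).Monic := by
      rw [show (X + 1 : ℤ[X]) = X + C 1 by simp]
      refine (cyclotomic.monic p ℤ).comp (monic_X_add_C 1) fun h => ?_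
      rw [natDegree_X_add_C] at h
      exact zero_ne_one h.symm
    have heq : e (cyclotomic p GaussianInt)
        = ((cyclotomic p ℤ).comp (X + 1)).map (Int.castRingHom GaussianInt) := by
      rw [he, algEquivAevalXAddC_apply, Polynomial.map_comp, map_cyclotomic]
      rw [show (X + 1 : ℤ[X]) = X + C 1 by simp, Polynomial.map_add, Polynomial.map_X,
        Polynomial.map_C]
      simp [comp_eq_aeval]
    rw [heq]
    set g := ((cyclotomic p ℤ).comp (X + 1)).map (Int.castRingHom GaussianInt) with hg
    have hgmonic : g.Monic := hIntMonic.map _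
    have hE := cyclotomic_comp_X_add_one_isEisensteinAt p
    have hdegg : g.natDegree = p - 1 := by
      rw [hg, hIntMonic.natDegree_map, natDegree_comp,
        show (X + 1 : ℤ[X]) = X + C 1 by simp, natDegree_X_add_C, mul_one,
        natDegree_cyclotomic, Nat.totient_prime hp]
    have hP : (Ideal.span {π}).IsPrime := (Ideal.span_singleton_prime hπ.ne_zero).2 hπ
    refine irreducible_of_eisenstein_criterion hP ?_ ?_ ?_ ?_ hgmonic.isPrimitive
    · rw [hgmonic.leadingCoeff]
      intro h
      exact hP.ne_top ((Ideal.eq_top_iff_one _).2 h)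
    · intro n hn
      have hndeg : n < g.natDegree := by
        rwa [degree_eq_natDegree hgmonic.ne_zero, Nat.cast_lt] at hn
      have hne : n ≠ ((cyclotomic p ℤ).comp (X + 1)).natDegree := by
        rw [← hIntMonic.natDegree_map (Int.castRingHom GaussianInt)]
        exact hndeg.ne
      have hcoeff := hE.coeff_mem hne
      rw [Ideal.submodule_span_eq, Ideal.mem_span_singleton] at hcoeff
      rw [Ideal.mem_span_singleton, hg, coeff_map]
      exact dvd_trans (by exact_mod_cast hdvd) (map_dvd (Int.castRingHom GaussianInt) hcoeff)
    · rw [degree_eq_natDegree hgmonic.ne_zero, hdegg]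
      exact_mod_cast Nat.sub_pos_of_lt hp.one_lt
    · have hc0 : ((cyclotomic p ℤ).comp (X + 1)).coeff 0 = (p : ℤ) := by
        rw [coeff_zero_eq_eval_zero, eval_comp, cyclotomic_prime, eval_add, eval_X, eval_one,
          zero_add, eval_geom_sum, one_geom_sum]
      have : g.coeff 0 = (p : GaussianInt) := by
        rw [hg, coeff_map, hc0]
        rfl
      rw [this]
      exact hmem
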